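/- For fixed θ > 0, if k = k(N) satisfies k/N → 1/e^{1/θ} as N → ∞ (the asymptotically optimal number of rejections in the Ewens model), then the success probability W(N,k)/[θ(θ+1)···(θ+N−1)] converges to 1/e as N → ∞, independent of θ. -/

import Mathlib

/-- Number of left-to-right maxima of the permutation `π` (one-line notation
`i ↦ π i`): positions `j` such that `π i < π j` for all `i < j`. -/
def lrmaxCount {N : ℕ} (π : Equiv.Perm (Fin N)) : ℕ :=
  (Finset.univ.filter (fun j : Fin N => ∀ i, i < j → π i < π j)).card

/-- Number of inversions of `π`: pairs of positions `i < j` with `π i > π j`. -/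
def invCount {N : ℕ} (π : Equiv.Perm (Fin N)) : ℕ :=
  (Finset.univ.filter (fun p : Fin N × Fin N => p.1 < p.2 ∧ π p.2 < π p.1)).card

/-- Position `j` is a left-to-right maximum of `π`. -/
def IsLRMax {N : ℕ} (π : Equiv.Perm (Fin N)) (j : Fin N) : Prop :=
  ∀ i, i < j → π i < π j

/-- `π` is `k`-winnable: the positional strategy that rejects the first `k`
candidates (positions `0,…,k-1`) and accepts the next left-to-right maximum
thereafter selects the position of the maximal value. -/
def KWinnable {N : ℕ} (k : ℕ) (π : Equiv.Perm (Fin N)) : Prop :=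
  ∃ j : Fin N, k ≤ (j : ℕ) ∧ IsLRMax π j ∧ (∀ i, π i ≤ π j) ∧
    ∀ i : Fin N, k ≤ (i : ℕ) → i < j → ¬ IsLRMax π i

open Classical in
/-- Ewens-weighted count of `k`-winnable permutations:
`W(N,k) = Σ_{k-winnable π ∈ S_N} θ^{lrmax(π)}`. -/
noncomputable def W (R : Type*) [CommRing R] (N k : ℕ) (θ : R) : R :=
  ∑ π ∈ Finset.univ.filter (fun π : Equiv.Perm (Fin N) => KWinnable k π),
    θ ^ lrmaxCount π


namespace EwensAux
open Finset

variable {n : ℕ}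

open Classical in
lemma lrmaxCount_eq_sum {n : ℕ} (π : Equiv.Perm (Fin n)) :
    lrmaxCount π = ∑ j : Fin n, if IsLRMax π j then 1 else 0 := by
  rw [lrmaxCount, Finset.card_filter]
  exact Finset.sum_congr rfl fun j _ => by
    by_cases h : IsLRMax π j
    · rw [if_pos h]; exact if_pos h
    · rw [if_neg h]; exact if_neg h

/-- insert `σ` on the first `n` positions (values skipping `v`), with value `v` at the last
position. -/
def ins (v : Fin (n+1)) (σ : Equiv.Perm (Fin n)) : Equiv.Perm (Fin (n+1)) :=
  (finSuccEquiv' (Fin.last n)).trans ((Equiv.optionCongr σ).trans (finSuccEquiv' v).symm)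

@[simp] lemma ins_castSucc (v : Fin (n+1)) (σ : Equiv.Perm (Fin n)) (i : Fin n) :
    ins v σ i.castSucc = v.succAbove (σ i) := by
  simp [ins, finSuccEquiv'_last_apply_castSucc, finSuccEquiv'_symm_some]

@[simp] lemma ins_last (v : Fin (n+1)) (σ : Equiv.Perm (Fin n)) :
    ins v σ (Fin.last n) = v := by
  simp [ins, finSuccEquiv'_at]

lemma isLRMax_ins_castSucc (v : Fin (n+1)) (σ : Equiv.Perm (Fin n)) (i : Fin n) :
    IsLRMax (ins v σ) i.castSucc ↔ IsLRMax σ i := by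
  constructor
  · intro h i' hi'
    have := h i'.castSucc (by simpa [Fin.castSucc_lt_castSucc_iff] using hi')
    simpa [Fin.succAbove_lt_succAbove_iff] using this
  · intro h i'' hi''
    have hne : i'' ≠ Fin.last n := Fin.ne_last_of_lt (lt_of_lt_of_le hi'' (Fin.le_last _))
    obtain ⟨i', rfl⟩ : ∃ i', i'' = Fin.castSucc i' :=
      ⟨i''.castPred hne, (Fin.castSucc_castPred i'' hne).symm⟩
    have : i' < i := by simpa [Fin.castSucc_lt_castSucc_iff] using hi''
    simpa [Fin.succAbove_lt_succAbove_iff] using h i' this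

lemma isLRMax_ins_last (v : Fin (n+1)) (σ : Equiv.Perm (Fin n)) :
    IsLRMax (ins v σ) (Fin.last n) ↔ v = Fin.last n := by
  constructor
  · intro h
    by_contra hv
    obtain ⟨t, ht⟩ := Fin.exists_succAbove_eq (Ne.symm hv : Fin.last n ≠ v)
    have := h (σ.symm t).castSucc (Fin.castSucc_lt_last _)
    rw [ins_castSucc, Equiv.apply_symm_apply, ht, ins_last] at this
    exact absurd this (not_lt.2 (Fin.le_last v))
  · rintro rfl i hi
    have hne : i ≠ Fin.last n := Fin.ne_last_of_lt hi
    obtain ⟨i', rfl⟩ : ∃ i', i = Fin.castSucc i' :=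
      ⟨i.castPred hne, (Fin.castSucc_castPred i hne).symm⟩
    rw [ins_castSucc, ins_last, Fin.succAbove_last]
    exact Fin.castSucc_lt_last _

open Classical in
lemma lrmaxCount_ins (v : Fin (n+1)) (σ : Equiv.Perm (Fin n)) :
    lrmaxCount (ins v σ) = lrmaxCount σ + (if v = Fin.last n then 1 else 0) := by
  rw [lrmaxCount_eq_sum, lrmaxCount_eq_sum, Fin.sum_univ_castSucc]
  congr 1
  · exact Finset.sum_congr rfl fun i _ => by
      simp [isLRMax_ins_castSucc]
  · simp [isLRMax_ins_last]

lemma ins_bijective :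
    Function.Bijective (fun p : Fin (n+1) × Equiv.Perm (Fin n) => ins p.1 p.2) := by
  rw [Fintype.bijective_iff_injective_and_card]
  constructor
  · rintro ⟨v, σ⟩ ⟨v', σ'⟩ h
    simp only at h
    have hv : v = v' := by
      have := congrArg (fun π : Equiv.Perm (Fin (n+1)) => π (Fin.last n)) h
      simpa using this
    subst hv
    refine Prod.ext rfl (Equiv.ext fun i => ?_)
    have := congrArg (fun π : Equiv.Perm (Fin (n+1)) => π i.castSucc) h
    simp only [ins_castSucc] at this
    exact Fin.succAbove_right_injective this
  · simp [Fintype.card_perm, Nat.factorial_succ]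

lemma sum_perm_succ (f : Equiv.Perm (Fin (n+1)) → ℝ) :
    ∑ π : Equiv.Perm (Fin (n+1)), f π
      = ∑ v : Fin (n+1), ∑ σ : Equiv.Perm (Fin n), f (ins v σ) := by
  calc ∑ π : Equiv.Perm (Fin (n+1)), f π
      = ∑ p : Fin (n+1) × Equiv.Perm (Fin n), f (ins p.1 p.2) :=
        (Fintype.sum_bijective _ ins_bijective (fun p => f (ins p.1 p.2)) f (fun p => rfl)).symm
    _ = _ := Fintype.sum_prod_type _


def NoRec (k : ℕ) (π : Equiv.Perm (Fin n)) : Prop :=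
  ∀ j : Fin n, k ≤ (j : ℕ) → ¬ IsLRMax π j

def OneRec (k : ℕ) (π : Equiv.Perm (Fin n)) : Prop :=
  ∃ j : Fin n, k ≤ (j : ℕ) ∧ IsLRMax π j ∧ ∀ i : Fin n, k ≤ (i : ℕ) → i ≠ j → ¬ IsLRMax π i

open Classical in
noncomputable def SA (θ : ℝ) (n k : ℕ) : ℝ :=
  ∑ π : Equiv.Perm (Fin n), if NoRec k π then θ ^ lrmaxCount π else 0

open Classical in
noncomputable def SB (θ : ℝ) (n k : ℕ) : ℝ :=
  ∑ π : Equiv.Perm (Fin n), if OneRec k π then θ ^ lrmaxCount π else 0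

noncomputable def ST (θ : ℝ) (n : ℕ) : ℝ :=
  ∑ π : Equiv.Perm (Fin n), θ ^ lrmaxCount π

lemma noRec_ins {k : ℕ} (hk : k ≤ n) (v : Fin (n+1)) (σ : Equiv.Perm (Fin n)) :
    NoRec k (ins v σ) ↔ v ≠ Fin.last n ∧ NoRec k σ := by
  constructor
  · intro h
    refine ⟨fun hv => h (Fin.last n) (by simpa using hk) ((isLRMax_ins_last v σ).2 hv), ?_⟩
    intro j hj hmax
    exact h j.castSucc (by simpa using hj) ((isLRMax_ins_castSucc v σ j).2 hmax)
  · rintro ⟨hv, h⟩ j hj hmax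
    by_cases hne : j = Fin.last n
    · exact hv ((isLRMax_ins_last v σ).1 (hne ▸ hmax))
    · obtain ⟨j', rfl⟩ : ∃ j', j = Fin.castSucc j' :=
        ⟨j.castPred hne, (Fin.castSucc_castPred j hne).symm⟩
      exact h j' (by simpa using hj) ((isLRMax_ins_castSucc v σ j').1 hmax)

lemma oneRec_ins_last {k : ℕ} (hk : k ≤ n) (σ : Equiv.Perm (Fin n)) :
    OneRec k (ins (Fin.last n) σ) ↔ NoRec k σ := by
  constructor
  · rintro ⟨j, hj, hmax, huniq⟩ i hi hmaxi
    have hlast : IsLRMax (ins (Fin.last n) σ) (Fin.last n) := (isLRMax_ins_last _ σ).2 rfl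
    have hjl : j = Fin.last n := by
      by_contra hne
      exact huniq (Fin.last n) (by simpa using hk) (fun h => hne h.symm) hlast
    subst hjl
    exact huniq i.castSucc (by simpa using hi)
      (fun h => absurd h (Fin.ne_last_of_lt (Fin.castSucc_lt_last i)))
      ((isLRMax_ins_castSucc _ σ i).2 hmaxi)
  · intro h
    refine ⟨Fin.last n, by simpa using hk, (isLRMax_ins_last _ σ).2 rfl, ?_⟩
    intro i hi hne hmaxi
    obtain ⟨i', rfl⟩ : ∃ i', i = Fin.castSucc i' :=
      ⟨i.castPred hne, (Fin.castSucc_castPred i hne).symm⟩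
    exact h i' (by simpa using hi) ((isLRMax_ins_castSucc _ σ i').1 hmaxi)

lemma oneRec_ins_castSucc {k : ℕ} (v : Fin n) (σ : Equiv.Perm (Fin n)) :
    OneRec k (ins v.castSucc σ) ↔ OneRec k σ := by
  have hv : v.castSucc ≠ Fin.last n := Fin.ne_last_of_lt (Fin.castSucc_lt_last v)
  constructor
  · rintro ⟨j, hj, hmax, huniq⟩
    have hne : j ≠ Fin.last n := by
      rintro rfl
      exact hv ((isLRMax_ins_last _ σ).1 hmax)
    obtain ⟨j', rfl⟩ : ∃ j', j = Fin.castSucc j' :=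
      ⟨j.castPred hne, (Fin.castSucc_castPred j hne).symm⟩
    refine ⟨j', by simpa using hj, (isLRMax_ins_castSucc _ σ j').1 hmax, ?_⟩
    intro i hi hine hmaxi
    exact huniq i.castSucc (by simpa using hi)
      (fun h => hine (by simpa [Fin.castSucc_inj] using h))
      ((isLRMax_ins_castSucc _ σ i).2 hmaxi)
  · rintro ⟨j, hj, hmax, huniq⟩
    refine ⟨j.castSucc, by simpa using hj, (isLRMax_ins_castSucc _ σ j).2 hmax, ?_⟩
    intro i hi hine hmaxi
    by_cases hne : i = Fin.last n
    · subst hne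
      exact hv ((isLRMax_ins_last _ σ).1 hmaxi)
    · obtain ⟨i', rfl⟩ : ∃ i', i = Fin.castSucc i' :=
        ⟨i.castPred hne, (Fin.castSucc_castPred i hne).symm⟩
      exact huniq i' (by simpa using hi)
        (fun h => hine (by simp [h])) ((isLRMax_ins_castSucc _ σ i').1 hmaxi)

open Classical in
lemma pow_lrmax_ins (θ : ℝ) (v : Fin (n+1)) (σ : Equiv.Perm (Fin n)) :
    θ ^ lrmaxCount (ins v σ) = θ ^ lrmaxCount σ * (if v = Fin.last n then θ else 1) := by
  rw [lrmaxCount_ins, pow_add]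
  by_cases h : v = Fin.last n <;> simp [h]

lemma ST_zero (θ : ℝ) : ST θ 0 = 1 := by
  rw [ST]
  rw [Finset.sum_eq_single_of_mem (1 : Equiv.Perm (Fin 0)) (Finset.mem_univ _)
    (fun π _ _ => absurd (Subsingleton.elim π 1) (by simp_all))]
  have : lrmaxCount (1 : Equiv.Perm (Fin 0)) = 0 := by
    rw [lrmaxCount]
    simp
  simp [this]

lemma ST_succ (θ : ℝ) (n : ℕ) : ST θ (n+1) = (θ + n) * ST θ n := by
  rw [ST, sum_perm_succ (fun π => θ ^ lrmaxCount π)]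
  have : ∀ v : Fin (n+1), ∑ σ : Equiv.Perm (Fin n), θ ^ lrmaxCount (ins v σ)
      = (if v = Fin.last n then θ else 1) * ST θ n := by
    intro v
    rw [ST, Finset.mul_sum]
    exact Finset.sum_congr rfl fun σ _ => by rw [pow_lrmax_ins]; ring
  rw [Finset.sum_congr rfl fun v _ => this v, Fin.sum_univ_castSucc]
  have hne : ∀ v : Fin n, v.castSucc ≠ Fin.last n :=
    fun v => Fin.ne_last_of_lt (Fin.castSucc_lt_last v)
  rw [Finset.sum_congr rfl fun v _ => by rw [if_neg (hne v)], if_pos rfl]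
  simp only [one_mul, Finset.sum_const, Finset.card_univ, Fintype.card_fin, nsmul_eq_mul]
  ring

lemma ST_eq (θ : ℝ) (n : ℕ) : ST θ n = ∏ i ∈ range n, (θ + i) := by
  induction n with
  | zero => simp [ST_zero]
  | succ n ih => rw [ST_succ, ih, Finset.prod_range_succ]; ring

open Classical in
lemma SA_succ (θ : ℝ) {k : ℕ} (hk : k ≤ n) : SA θ (n+1) k = n * SA θ n k := by
  rw [SA, sum_perm_succ (fun π => if NoRec k π then θ ^ lrmaxCount π else 0)]
  have hterm : ∀ (v : Fin (n+1)) (σ : Equiv.Perm (Fin n)),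
      (if NoRec k (ins v σ) then θ ^ lrmaxCount (ins v σ) else 0)
      = if v = Fin.last n then 0 else (if NoRec k σ then θ ^ lrmaxCount σ else 0) := by
    intro v σ
    by_cases hv : v = Fin.last n
    · rw [if_pos hv, if_neg (fun h => ((noRec_ins hk v σ).1 h).1 hv)]
    · rw [if_neg hv]
      by_cases h : NoRec k σ
      · rw [if_pos h, if_pos ((noRec_ins hk v σ).2 ⟨hv, h⟩), pow_lrmax_ins, if_neg hv, mul_one]
      · rw [if_neg h, if_neg (fun h' => h ((noRec_ins hk v σ).1 h').2)]
  simp only [hterm]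
  rw [Fin.sum_univ_castSucc]
  have hne : ∀ v : Fin n, v.castSucc ≠ Fin.last n :=
    fun v => Fin.ne_last_of_lt (Fin.castSucc_lt_last v)
  have h1 : ∀ v : Fin n, (∑ σ : Equiv.Perm (Fin n),
      if v.castSucc = Fin.last n then (0:ℝ)
      else (if NoRec k σ then θ ^ lrmaxCount σ else 0)) = SA θ n k := by
    intro v
    rw [SA]
    exact Finset.sum_congr rfl fun σ _ => by rw [if_neg (hne v)]
  rw [Finset.sum_congr rfl fun v _ => h1 v]
  have h2 : (∑ σ : Equiv.Perm (Fin n),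
      if (Fin.last n : Fin (n+1)) = Fin.last n then (0:ℝ)
      else (if NoRec k σ then θ ^ lrmaxCount σ else 0)) = 0 :=
    Finset.sum_eq_zero fun σ _ => if_pos rfl
  rw [h2]
  simp [Finset.sum_const, nsmul_eq_mul]

open Classical in
lemma SB_succ (θ : ℝ) {k : ℕ} (hk : k ≤ n) :
    SB θ (n+1) k = n * SB θ n k + θ * SA θ n k := by
  rw [SB, sum_perm_succ (fun π => if OneRec k π then θ ^ lrmaxCount π else 0)]
  have hterm : ∀ (v : Fin (n+1)) (σ : Equiv.Perm (Fin n)),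
      (if OneRec k (ins v σ) then θ ^ lrmaxCount (ins v σ) else 0)
      = if v = Fin.last n then θ * (if NoRec k σ then θ ^ lrmaxCount σ else 0)
        else (if OneRec k σ then θ ^ lrmaxCount σ else 0) := by
    intro v σ
    by_cases hv : v = Fin.last n
    · subst hv
      rw [if_pos rfl]
      by_cases h : NoRec k σ
      · rw [if_pos ((oneRec_ins_last hk σ).2 h), if_pos h, pow_lrmax_ins, if_pos rfl]; ring
      · rw [if_neg (fun h' => h ((oneRec_ins_last hk σ).1 h')), if_neg h, mul_zero]
    · rw [if_neg hv]
      obtain ⟨v', rfl⟩ : ∃ v', v = Fin.castSucc v' :=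
        ⟨v.castPred hv, (Fin.castSucc_castPred v hv).symm⟩
      by_cases h : OneRec k σ
      · rw [if_pos ((oneRec_ins_castSucc v' σ).2 h), if_pos h, pow_lrmax_ins, if_neg hv, mul_one]
      · rw [if_neg (fun h' => h ((oneRec_ins_castSucc v' σ).1 h')), if_neg h]
  simp only [hterm]
  rw [Fin.sum_univ_castSucc]
  have hne : ∀ v : Fin n, v.castSucc ≠ Fin.last n :=
    fun v => Fin.ne_last_of_lt (Fin.castSucc_lt_last v)
  have h1 : ∀ v : Fin n, (∑ σ : Equiv.Perm (Fin n),
      if v.castSucc = Fin.last n then θ * (if NoRec k σ then θ ^ lrmaxCount σ else 0)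
      else (if OneRec k σ then θ ^ lrmaxCount σ else 0)) = SB θ n k := by
    intro v
    rw [SB]
    exact Finset.sum_congr rfl fun σ _ => by rw [if_neg (hne v)]
  rw [Finset.sum_congr rfl fun v _ => h1 v]
  have h2 : (∑ σ : Equiv.Perm (Fin n),
      if (Fin.last n : Fin (n+1)) = Fin.last n then
        θ * (if NoRec k σ then θ ^ lrmaxCount σ else 0)
      else (if OneRec k σ then θ ^ lrmaxCount σ else 0)) = θ * SA θ n k := by
    rw [SA, Finset.mul_sum]
    exact Finset.sum_congr rfl fun σ _ => if_pos rfl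
  rw [h2]
  simp [Finset.sum_const, nsmul_eq_mul]

open Classical in
lemma SA_base (θ : ℝ) (k : ℕ) : SA θ k k = ST θ k := by
  rw [SA, ST]
  refine Finset.sum_congr rfl fun π _ => ?_
  rw [if_pos]
  intro j hj
  exact absurd hj (by simpa using j.isLt)

open Classical in
lemma SB_base (θ : ℝ) (k : ℕ) : SB θ k k = 0 := by
  rw [SB]
  refine Finset.sum_eq_zero fun π _ => ?_
  rw [if_neg]
  rintro ⟨j, hj, -⟩
  exact absurd hj (by simpa using j.isLt)

lemma SA_eq (θ : ℝ) {k n : ℕ} (hk : k ≤ n) :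
    SA θ n k = ST θ k * ∏ i ∈ Ico k n, (i : ℝ) := by
  induction n, hk using Nat.le_induction with
  | base => simp [SA_base]
  | succ n hk ih =>
      rw [SA_succ θ hk, ih, Finset.prod_Ico_succ_top hk]
      ring

lemma SB_eq (θ : ℝ) {k n : ℕ} (hk1 : 1 ≤ k) (hk : k ≤ n) :
    SB θ n k = θ * ST θ k * ((∏ i ∈ Ico k n, (i : ℝ)) * ∑ j ∈ Ico k n, 1 / (j : ℝ)) := by
  induction n, hk using Nat.le_induction with
  | base => simp [SB_base]
  | succ n hk ih =>
      rw [SB_succ θ hk, ih, SA_eq θ hk, Finset.prod_Ico_succ_top hk,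
        Finset.sum_Ico_succ_top hk]
      have hn0 : (n : ℝ) ≠ 0 := Nat.cast_ne_zero.2 (by omega)
      field_simp


lemma kWinnable_iff_oneRec {n k : ℕ} (π : Equiv.Perm (Fin n)) :
    KWinnable k π ↔ OneRec k π := by
  constructor
  · rintro ⟨j, hj, hmax, htop, hno⟩
    refine ⟨j, hj, hmax, ?_⟩
    intro i hi hne hmaxi
    rcases lt_trichotomy i j with h | h | h
    · exact hno i hi h hmaxi
    · exact hne h
    · have : π j < π i := hmaxi j h
      exact absurd (htop i) (not_le.2 this)
  · rintro ⟨j, hj, hmax, huniq⟩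
    -- the position of the maximum
    obtain ⟨m, -, hm⟩ := Finset.exists_max_image (Finset.univ : Finset (Fin n))
      (fun i => π i) ⟨j, Finset.mem_univ j⟩
    have hmmax : IsLRMax π m := by
      intro i hi
      exact lt_of_le_of_ne (hm i (Finset.mem_univ i))
        (fun h => absurd (π.injective h) (ne_of_lt hi))
    have hmj : m = j := by
      by_cases hkm : k ≤ (m : ℕ)
      · by_contra hne
        exact huniq m hkm hne hmmax
      · -- m < k ≤ j so m < j, but π j ≤ π m contradicts IsLRMax π j
        have hlt : m < j := by
          rw [Fin.lt_def]; omega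
        have := hmax m hlt
        exact absurd (hm j (Finset.mem_univ j)) (not_le.2 this)
    subst hmj
    exact ⟨m, hj, hmax, fun i => hm i (Finset.mem_univ i), fun i hi hlt => huniq i hi (ne_of_lt hlt)⟩

open Classical in
lemma W_eq_SB (θ : ℝ) (n k : ℕ) : W ℝ n k θ = SB θ n k := by
  rw [W, SB, Finset.sum_filter]
  exact Finset.sum_congr rfl fun π _ => by
    by_cases h : OneRec k π
    · rw [if_pos h, if_pos ((kWinnable_iff_oneRec π).2 h)]
    · rw [if_neg h, if_neg (fun h' => h ((kWinnable_iff_oneRec π).1 h'))]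

lemma W_eq (θ : ℝ) {k n : ℕ} (hk1 : 1 ≤ k) (hk : k ≤ n) :
    W ℝ n k θ = θ * (∏ i ∈ range k, (θ + i)) *
      ((∏ i ∈ Ico k n, (i : ℝ)) * ∑ j ∈ Ico k n, 1 / (j : ℝ)) := by
  rw [W_eq_SB, SB_eq θ hk1 hk, ST_eq]

lemma ratio_eq (θ : ℝ) (hθ : 0 < θ) {k n : ℕ} (hk1 : 1 ≤ k) (hk : k ≤ n) :
    W ℝ n k θ / ∏ j ∈ range n, (θ + j)
      = θ * (∑ j ∈ Ico k n, 1 / (j : ℝ)) * ∏ i ∈ Ico k n, ((i : ℝ) / (θ + i)) := by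
  have hsplit : (∏ j ∈ range k, (θ + j)) * ∏ j ∈ Ico k n, (θ + j)
      = ∏ j ∈ range n, (θ + j) := by
    have := Finset.prod_Ico_consecutive (fun j : ℕ => (θ + (j:ℝ))) (Nat.zero_le k) hk
    simpa [← Finset.range_eq_Ico] using this
  have hpos : ∀ i : ℕ, (0:ℝ) < θ + i := fun i => by positivity
  have h1 : (∏ j ∈ range k, (θ + (j:ℝ))) ≠ 0 :=
    ne_of_gt (Finset.prod_pos fun i _ => hpos i)
  have h2 : (∏ j ∈ Ico k n, (θ + (j:ℝ))) ≠ 0 :=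
    ne_of_gt (Finset.prod_pos fun i _ => hpos i)
  rw [W_eq θ hk1 hk, ← hsplit, Finset.prod_div_distrib]
  field_simp


open Finset Filter Real

lemma telescope (f : ℕ → ℝ) {a b : ℕ} (h : a ≤ b) :
    ∑ j ∈ Ico a b, (f (j+1) - f j) = f b - f a := by
  rw [Finset.sum_Ico_eq_sub _ h, Finset.sum_range_sub, Finset.sum_range_sub]
  ring

lemma log_sub_le_harm {a b : ℕ} (ha : 1 ≤ a) (hab : a ≤ b) :
    Real.log b - Real.log a ≤ ∑ j ∈ Ico a b, 1/(j:ℝ) := by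
  rw [← telescope (fun j => Real.log j) hab]
  refine Finset.sum_le_sum fun j hj => ?_
  have hj1 : 1 ≤ j := le_trans ha (Finset.mem_Ico.1 hj).1
  have hj0 : (0:ℝ) < j := by exact_mod_cast hj1
  have h1 : Real.log ((j:ℝ)+1) - Real.log j = Real.log (((j:ℝ)+1)/j) := by
    rw [Real.log_div (by positivity) (ne_of_gt hj0)]
  have h2 : Real.log (((j:ℝ)+1)/j) ≤ ((j:ℝ)+1)/j - 1 :=
    Real.log_le_sub_one_of_pos (by positivity)
  have h3 : ((j:ℝ)+1)/j - 1 = 1/j := by field_simp; ring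
  push_cast
  calc Real.log ((j:ℝ)+1) - Real.log j ≤ 1/(j:ℝ) := by rw [h1, ← h3]; exact h2

lemma harm_le_log_sub {a b : ℕ} (ha : 2 ≤ a) (hab : a ≤ b) :
    ∑ j ∈ Ico a b, 1/(j:ℝ) ≤ Real.log ((b:ℝ)-1) - Real.log ((a:ℝ)-1) := by
  have := telescope (fun j => Real.log ((j:ℝ)-1)) hab
  calc ∑ j ∈ Ico a b, 1/(j:ℝ)
      ≤ ∑ j ∈ Ico a b, (Real.log (((j:ℕ)+1:ℝ)-1) - Real.log ((j:ℝ)-1)) := by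
        refine Finset.sum_le_sum fun j hj => ?_
        have hj2 : 2 ≤ j := le_trans ha (Finset.mem_Ico.1 hj).1
        have hj0 : (0:ℝ) < (j:ℝ) - 1 := by
          have : (2:ℝ) ≤ j := by exact_mod_cast hj2
          linarith
        have hjpos : (0:ℝ) < j := by linarith
        have h1 : Real.log (((j:ℝ)-1)/j) ≤ ((j:ℝ)-1)/j - 1 :=
          Real.log_le_sub_one_of_pos (by positivity)
        rw [Real.log_div (ne_of_gt hj0) (ne_of_gt hjpos)] at h1
        have h2 : ((j:ℝ)-1)/j - 1 = -(1/j) := by field_simp; ring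
        have : ((j:ℕ):ℝ) + 1 - 1 = (j:ℝ) := by ring
        rw [this]
        linarith
    _ = Real.log ((b:ℝ)-1) - Real.log ((a:ℝ)-1) := by
        rw [← telescope (fun j => Real.log ((j:ℝ)-1)) hab]
        exact Finset.sum_congr rfl fun j _ => by push_cast; ring_nf

lemma harm_tendsto (a b : ℕ → ℕ) (c : ℝ) (hc : 0 < c)
    (hev : ∀ᶠ N in atTop, 2 ≤ a N ∧ a N ≤ b N)
    (h1 : Tendsto (fun N => (a N : ℝ) / (b N : ℝ)) atTop (nhds c))
    (h2 : Tendsto (fun N => ((a N : ℝ) - 1) / ((b N : ℝ) - 1)) atTop (nhds c)) :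
    Tendsto (fun N => ∑ j ∈ Ico (a N) (b N), 1/(j:ℝ)) atTop (nhds (-Real.log c)) := by
  have hlog : ContinuousAt Real.log c := Real.continuousAt_log (ne_of_gt hc)
  have hg : Tendsto (fun N => Real.log (b N) - Real.log (a N)) atTop (nhds (-Real.log c)) := by
    have := (hlog.tendsto.comp h1).neg
    refine this.congr' ?_
    filter_upwards [hev] with N ⟨h2a, hab⟩
    have ha0 : (0:ℝ) < a N := by exact_mod_cast lt_of_lt_of_le Nat.zero_lt_two h2a
    have hb0 : (0:ℝ) < b N := lt_of_lt_of_le ha0 (by exact_mod_cast hab)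
    simp only [Function.comp_apply]
    rw [Real.log_div (ne_of_gt ha0) (ne_of_gt hb0)]
    ring
  have hu : Tendsto (fun N => Real.log ((b N:ℝ)-1) - Real.log ((a N:ℝ)-1)) atTop
      (nhds (-Real.log c)) := by
    have := (hlog.tendsto.comp h2).neg
    refine this.congr' ?_
    filter_upwards [hev] with N ⟨h2a, hab⟩
    have ha0 : (0:ℝ) < (a N:ℝ) - 1 := by
      have : (2:ℝ) ≤ a N := by exact_mod_cast h2a
      linarith
    have hb0 : (0:ℝ) < (b N:ℝ) - 1 := by
      have : (a N:ℝ) ≤ b N := by exact_mod_cast hab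
      linarith
    simp only [Function.comp_apply]
    rw [Real.log_div (ne_of_gt ha0) (ne_of_gt hb0)]
    ring
  refine tendsto_of_tendsto_of_tendsto_of_le_of_le' hg hu ?_ ?_
  · filter_upwards [hev] with N ⟨h2a, hab⟩
    exact log_sub_le_harm (le_trans one_le_two h2a) hab
  · filter_upwards [hev] with N ⟨h2a, hab⟩
    exact harm_le_log_sub h2a hab

lemma ratio_shift (k : ℕ → ℕ) {c : ℝ} (p q : ℝ)
    (hk : Tendsto (fun N => (k N:ℝ)/(N:ℝ)) atTop (nhds c)) :
    Tendsto (fun N => ((k N:ℝ)+p)/((N:ℝ)+q)) atTop (nhds c) := by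
  have h0 : Tendsto (fun N : ℕ => 1/(N:ℝ)) atTop (nhds 0) :=
    tendsto_one_div_atTop_nhds_zero_nat
  have hnum : Tendsto (fun N => (k N:ℝ)/N + p * (1/N)) atTop (nhds (c + p*0)) :=
    hk.add (h0.const_mul p)
  have hden : Tendsto (fun N : ℕ => 1 + q * (1/N)) atTop (nhds (1 + q*0)) :=
    tendsto_const_nhds.add (h0.const_mul q)
  have hlim := hnum.div hden (by norm_num)
  have : (c + p*0) / (1 + q*0) = c := by norm_num
  rw [this] at hlim
  refine hlim.congr' ?_
  filter_upwards [eventually_gt_atTop 0] with N hN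
  have hN0 : (N:ℝ) ≠ 0 := Nat.cast_ne_zero.2 hN.ne'
  simp only [Pi.div_apply]
  have e1 : (k N:ℝ)/N + p * (1/N) = ((k N:ℝ)+p)/N := by field_simp
  have e2 : 1 + q * (1/(N:ℝ)) = ((N:ℝ)+q)/N := by field_simp
  by_cases hq : (N:ℝ) + q = 0
  · rw [e1, e2, hq, zero_div, div_zero, div_zero]
  · rw [e1, e2]
    field_simp


section Limits
variable {θ : ℝ} {k : ℕ → ℕ}

lemma k_atTop (hc : (0:ℝ) < Real.exp (-(1/θ)))
    (hk : Tendsto (fun N => (k N : ℝ) / (N : ℝ)) atTop (nhds (Real.exp (-(1/θ))))) :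
    Tendsto k atTop atTop := by
  have hmul : Tendsto (fun N : ℕ => ((k N:ℝ)/N) * N) atTop atTop :=
    Tendsto.pos_mul_atTop hc hk tendsto_natCast_atTop_atTop
  have : Tendsto (fun N : ℕ => (k N : ℝ)) atTop atTop := by
    refine hmul.congr' ?_
    filter_upwards [eventually_gt_atTop 0] with N hN
    have hN0 : (N:ℝ) ≠ 0 := Nat.cast_ne_zero.2 hN.ne'
    field_simp
  exact tendsto_natCast_atTop_iff.1 this

lemma k_lt_N (hθ : 0 < θ)
    (hk : Tendsto (fun N => (k N : ℝ) / (N : ℝ)) atTop (nhds (Real.exp (-(1/θ))))) :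
    ∀ᶠ N in atTop, k N < N := by
  have hc1 : Real.exp (-(1/θ)) < 1 := by
    rw [Real.exp_lt_one_iff]
    simp only [neg_lt, neg_zero]
    positivity
  filter_upwards [hk.eventually_lt_const hc1, eventually_gt_atTop 0] with N h1 h2
  have hN0 : (0:ℝ) < N := by exact_mod_cast h2
  have := (div_lt_one hN0).1 h1
  exact_mod_cast this

lemma harm_main (hθ : 0 < θ)
    (hk : Tendsto (fun N => (k N : ℝ) / (N : ℝ)) atTop (nhds (Real.exp (-(1/θ)))))
    (m : ℕ) :
    Tendsto (fun N => ∑ j ∈ Ico (k N + m) (N + m), 1/(j:ℝ)) atTop (nhds (1/θ)) := by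
  set c := Real.exp (-(1/θ)) with hcdef
  have hc : 0 < c := Real.exp_pos _
  have hka := k_atTop hc hk
  have hlt := k_lt_N hθ hk
  have hres : (-Real.log c) = 1/θ := by rw [hcdef, Real.log_exp, neg_neg]
  rw [← hres]
  refine harm_tendsto (fun N => k N + m) (fun N => N + m) c hc ?_ ?_ ?_
  · filter_upwards [hka.eventually_ge_atTop 2, hlt] with N h1 h2
    exact ⟨by omega, by omega⟩
  · refine (ratio_shift k (m:ℝ) (m:ℝ) hk).congr fun N => ?_
    push_cast
    ring
  · refine (ratio_shift k ((m:ℝ)-1) ((m:ℝ)-1) hk).congr fun N => ?_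
    push_cast
    ring_nf

lemma harm_zero (hθ : 0 < θ)
    (hk : Tendsto (fun N => (k N : ℝ) / (N : ℝ)) atTop (nhds (Real.exp (-(1/θ))))) :
    Tendsto (fun N => ∑ j ∈ Ico (k N) N, 1/(j:ℝ)) atTop (nhds (1/θ)) := by
  have := harm_main hθ hk 0
  simpa using this

lemma prod_main (hθ : 0 < θ)
    (hk : Tendsto (fun N => (k N : ℝ) / (N : ℝ)) atTop (nhds (Real.exp (-(1/θ))))) :
    Tendsto (fun N => ∏ i ∈ Ico (k N) N, ((i:ℝ)/(θ+i))) atTop (nhds (Real.exp (-1))) := by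
  have hc : 0 < Real.exp (-(1/θ)) := Real.exp_pos _
  have hka := k_atTop hc hk
  set m := ⌈θ⌉₊ with hmdef
  have hm : θ ≤ m := Nat.le_ceil θ
  set G : ℕ → ℝ := fun N => ∑ i ∈ Ico (k N) N, Real.log ((θ+(i:ℝ))/(i:ℝ)) with hGdef
  have hG : Tendsto G atTop (nhds 1) := by
    have hup : Tendsto (fun N => θ * ∑ j ∈ Ico (k N) N, 1/(j:ℝ)) atTop (nhds 1) := by
      have := (harm_zero hθ hk).const_mul θ
      have hθ1 : θ * (1/θ) = 1 := by field_simp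
      rwa [hθ1] at this
    have hlo : Tendsto (fun N => θ * ∑ j ∈ Ico (k N + m) (N + m), 1/(j:ℝ)) atTop (nhds 1) := by
      have := (harm_main hθ hk m).const_mul θ
      have hθ1 : θ * (1/θ) = 1 := by field_simp
      rwa [hθ1] at this
    refine tendsto_of_tendsto_of_tendsto_of_le_of_le' hlo hup ?_ ?_
    · filter_upwards [hka.eventually_ge_atTop 1] with N h1
      have hshift : ∑ j ∈ Ico (k N + m) (N + m), 1/(j:ℝ)
          = ∑ i ∈ Ico (k N) N, 1/((m:ℝ)+(i:ℝ)) := by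
        rw [← Finset.sum_Ico_add (fun j : ℕ => 1/(j:ℝ)) (k N) N m]
        exact Finset.sum_congr rfl fun i _ => by push_cast; ring_nf
      rw [hshift, Finset.mul_sum]
      refine Finset.sum_le_sum fun i hi => ?_
      have hi1 : 1 ≤ i := le_trans h1 (Finset.mem_Ico.1 hi).1
      have hi0 : (0:ℝ) < i := by exact_mod_cast hi1
      have hθi : (0:ℝ) < θ + i := by positivity
      have hlog : Real.log ((i:ℝ)/(θ+i)) ≤ (i:ℝ)/(θ+i) - 1 :=
        Real.log_le_sub_one_of_pos (by positivity)
      rw [Real.log_div (ne_of_gt hi0) (ne_of_gt hθi)] at hlog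
      have key : θ/(θ+(i:ℝ)) ≤ Real.log ((θ+(i:ℝ))/(i:ℝ)) := by
        rw [Real.log_div (ne_of_gt hθi) (ne_of_gt hi0)]
        have : (i:ℝ)/(θ+i) - 1 = -(θ/(θ+i)) := by field_simp; ring
        linarith [hlog]
      have key2 : θ * (1/((m:ℝ)+(i:ℝ))) ≤ θ/(θ+(i:ℝ)) := by
        rw [mul_one_div]
        apply div_le_div_of_nonneg_left hθ.le hθi
        have : θ ≤ (m:ℝ) := hm
        linarith
      linarith
    · filter_upwards [hka.eventually_ge_atTop 1] with N h1
      rw [Finset.mul_sum]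
      refine Finset.sum_le_sum fun i hi => ?_
      have hi1 : 1 ≤ i := le_trans h1 (Finset.mem_Ico.1 hi).1
      have hi0 : (0:ℝ) < i := by exact_mod_cast hi1
      have hθi : (0:ℝ) < θ + i := by positivity
      have hlog : Real.log ((θ+(i:ℝ))/(i:ℝ)) ≤ (θ+(i:ℝ))/(i:ℝ) - 1 :=
        Real.log_le_sub_one_of_pos (by positivity)
      have : (θ+(i:ℝ))/(i:ℝ) - 1 = θ * (1/(i:ℝ)) := by field_simp; ring
      linarith
  have hexp : Tendsto (fun N => Real.exp (-(G N))) atTop (nhds (Real.exp (-1))) :=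
    (Real.continuous_exp.tendsto _).comp hG.neg
  refine hexp.congr' ?_
  filter_upwards [hka.eventually_ge_atTop 1] with N h1
  rw [hGdef]
  simp only
  rw [← Finset.sum_neg_distrib, Real.exp_sum]
  refine Finset.prod_congr rfl fun i hi => ?_
  have hi1 : 1 ≤ i := le_trans h1 (Finset.mem_Ico.1 hi).1
  have hi0 : (0:ℝ) < i := by exact_mod_cast hi1
  have hθi : (0:ℝ) < θ + i := by positivity
  rw [← Real.log_inv, inv_div, Real.exp_log (by positivity)]

end Limits
end EwensAux

/-- asymptotic success probability in the Ewens model.  For fixed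
`θ > 0`, if `k(N)/N → 1/e^{1/θ}`, then the success probability
`W(N,k(N)) / (θ(θ+1)⋯(θ+N−1))` converges to `1/e`, independent of `θ`. -/
theorem ewens_asymptotic_success (θ : ℝ) (hθ : 0 < θ) (k : ℕ → ℕ)
    (hk : Filter.Tendsto (fun N => (k N : ℝ) / (N : ℝ)) Filter.atTop
      (nhds (Real.exp (-(1 / θ))))) :
    Filter.Tendsto
      (fun N => W ℝ N (k N) θ / ∏ j ∈ Finset.range N, (θ + j))
      Filter.atTop (nhds (Real.exp (-1))) := by
  have hka := EwensAux.k_atTop (Real.exp_pos _) hk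
  have hlt := EwensAux.k_lt_N hθ hk
  have hS := EwensAux.harm_zero hθ hk
  have hP := EwensAux.prod_main hθ hk
  have hlim : Filter.Tendsto
      (fun N => θ * (∑ j ∈ Finset.Ico (k N) N, 1/(j:ℝ)) *
        ∏ i ∈ Finset.Ico (k N) N, ((i:ℝ)/(θ+i)))
      Filter.atTop (nhds (θ * (1/θ) * Real.exp (-1))) := (hS.const_mul θ).mul hP
  have h1 : θ * (1/θ) * Real.exp (-1) = Real.exp (-1) := by field_simp
  rw [h1] at hlim
  refine hlim.congr' ?_
  filter_upwards [hka.eventually_ge_atTop 1, hlt] with N hN1 hN2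
  exact (EwensAux.ratio_eq θ hθ hN1 (le_of_lt hN2)).symm
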